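/- Let Y be a real Banach space and Y ⊕_ℂ Y its complexification with the norm ‖(x,y)‖ = sup_{θ∈[0,2π]} ‖cos(θ)x + sin(θ)y‖. If X is a real Banach space containing Y such that every bounded linear operator T : Y → C[0,1] extends to a bounded operator on X (the C[0,1]-extension property), then every bounded ℂ-linear operator T : Y ⊕_ℂ Y → C([0,1], ℂ) extends to a bounded ℂ-linear operator on X ⊕_ℂ X. -/

import Mathlib

open Complex

variable {E : Type*} [NormedAddCommGroup E] [NormedSpace ℝ E]

/-- The complexification norm `‖(x,y)‖ = sup_{θ∈[0,2π]} ‖cos θ · x + sin θ · y‖`. -/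
noncomputable def complexificationNorm (p : E × E) : ℝ :=
  sSup ((fun θ : ℝ => ‖Real.cos θ • p.1 + Real.sin θ • p.2‖) '' Set.Icc 0 (2 * Real.pi))

/-- Multiplication by `i` on the complexification `E ⊕_ℂ E`. -/
def complexificationJ : E × E →ₗ[ℝ] E × E where
  toFun p := (-p.2, p.1)
  map_add' p q := by simp [Prod.ext_iff]; abel
  map_smul' c p := by simp [Prod.ext_iff]

lemma cn_bddAbove (p : E × E) :
    BddAbove ((fun θ : ℝ => ‖Real.cos θ • p.1 + Real.sin θ • p.2‖) '' Set.Icc 0 (2 * Real.pi)) := by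
  refine ⟨‖p.1‖ + ‖p.2‖, ?_⟩
  rintro r ⟨θ, -, rfl⟩
  calc ‖Real.cos θ • p.1 + Real.sin θ • p.2‖ ≤ ‖Real.cos θ • p.1‖ + ‖Real.sin θ • p.2‖ :=
        norm_add_le _ _
    _ ≤ ‖p.1‖ + ‖p.2‖ := by
        gcongr <;> rw [norm_smul, Real.norm_eq_abs]
        · exact mul_le_of_le_one_left (norm_nonneg _) (Real.abs_cos_le_one θ)
        · exact mul_le_of_le_one_left (norm_nonneg _) (Real.abs_sin_le_one θ)

lemma cn_fst_le (p : E × E) : ‖p.1‖ ≤ complexificationNorm p := by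
  apply le_csSup (cn_bddAbove p)
  exact ⟨0, ⟨le_refl _, by positivity⟩, by simp⟩

lemma cn_snd_le (p : E × E) : ‖p.2‖ ≤ complexificationNorm p := by
  apply le_csSup (cn_bddAbove p)
  refine ⟨Real.pi / 2, ⟨by positivity, by nlinarith [Real.pi_pos]⟩, by simp⟩

lemma cn_single_le (y : E) : complexificationNorm (y, (0 : E)) ≤ ‖y‖ := by
  apply csSup_le
  · exact (Set.nonempty_Icc.mpr (by positivity)).image _
  · rintro r ⟨θ, -, rfl⟩
    simp only [smul_zero, add_zero, norm_smul, Real.norm_eq_abs]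
    exact mul_le_of_le_one_left (norm_nonneg _) (Real.abs_cos_le_one θ)

/-- if `(Y, X)` has the `C[0,1]`-extension property, then the
complexifications have the `C([0,1], ℂ)`-extension property. -/
theorem complexification_extension_property
    (Y X : Type*)
    [NormedAddCommGroup Y] [NormedSpace ℝ Y] [CompleteSpace Y]
    [NormedAddCommGroup X] [NormedSpace ℝ X] [CompleteSpace X]
    (ι : Y →ₗᵢ[ℝ] X)  -- Y is a subspace of X
    -- (Y, X) has the C[0,1]-extension property
    (hext : ∀ T : Y →L[ℝ] C(Set.Icc (0:ℝ) 1, ℝ),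
      ∃ S : X →L[ℝ] C(Set.Icc (0:ℝ) 1, ℝ), ∀ y : Y, S (ι y) = T y)
    -- T is a bounded ℂ-linear operator on the complexification Y ⊕_ℂ Y
    (T : Y × Y →ₗ[ℝ] C(Set.Icc (0:ℝ) 1, ℂ))
    (hTc : ∀ p : Y × Y, T (complexificationJ p) = Complex.I • T p)
    (hTbdd : ∃ c : ℝ, ∀ p : Y × Y, ‖T p‖ ≤ c * complexificationNorm p) :
    -- T extends to a bounded ℂ-linear operator on X ⊕_ℂ X
    ∃ S : X × X →ₗ[ℝ] C(Set.Icc (0:ℝ) 1, ℂ),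
      (∀ p : X × X, S (complexificationJ p) = Complex.I • S p) ∧
      (∃ c : ℝ, ∀ p : X × X, ‖S p‖ ≤ c * complexificationNorm p) ∧
      (∀ p : Y × Y, S (ι p.1, ι p.2) = T p) := by
  obtain ⟨c₀, hc₀⟩ := hTbdd
  -- A y = T (y, 0), bounded
  set A : Y →ₗ[ℝ] C(Set.Icc (0:ℝ) 1, ℂ) := T.comp (LinearMap.inl ℝ Y Y) with hA
  have hAbdd : ∀ y : Y, ‖A y‖ ≤ (max c₀ 0) * ‖y‖ := by
    intro y
    have h1 : ‖A y‖ ≤ c₀ * complexificationNorm (y, (0:Y)) := hc₀ (y, 0)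
    have h2 : complexificationNorm (y, (0:Y)) ≤ ‖y‖ := cn_single_le y
    have h3 : (0:ℝ) ≤ complexificationNorm (y, (0:Y)) :=
      le_trans (norm_nonneg y) (cn_fst_le (y, (0:Y)))
    calc ‖A y‖ ≤ c₀ * complexificationNorm (y, (0:Y)) := h1
      _ ≤ (max c₀ 0) * complexificationNorm (y, (0:Y)) := by
          exact mul_le_mul_of_nonneg_right (le_max_left _ _) h3
      _ ≤ (max c₀ 0) * ‖y‖ := by
          exact mul_le_mul_of_nonneg_left h2 (le_max_right _ _)
  set Acl : Y →L[ℝ] C(Set.Icc (0:ℝ) 1, ℂ) := A.mkContinuous (max c₀ 0) hAbdd with hAcl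
  set Are : Y →L[ℝ] C(Set.Icc (0:ℝ) 1, ℝ) :=
    ((Complex.reCLM.restrictScalars ℝ).compLeftContinuous ℝ (Set.Icc (0:ℝ) 1)).comp Acl
  set Aim : Y →L[ℝ] C(Set.Icc (0:ℝ) 1, ℝ) :=
    ((Complex.imCLM.restrictScalars ℝ).compLeftContinuous ℝ (Set.Icc (0:ℝ) 1)).comp Acl
  obtain ⟨Bre, hBre⟩ := hext Are
  obtain ⟨Bim, hBim⟩ := hext Aim
  set o : C(Set.Icc (0:ℝ) 1, ℝ) →L[ℝ] C(Set.Icc (0:ℝ) 1, ℂ) :=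
    Complex.ofRealCLM.compLeftContinuous ℝ (Set.Icc (0:ℝ) 1) with ho
  set B : X →L[ℝ] C(Set.Icc (0:ℝ) 1, ℂ) := o.comp Bre + Complex.I • (o.comp Bim) with hB
  set S : X × X →L[ℝ] C(Set.Icc (0:ℝ) 1, ℂ) :=
    B.comp (ContinuousLinearMap.fst ℝ X X) +
      Complex.I • (B.comp (ContinuousLinearMap.snd ℝ X X)) with hS
  have hSapp : ∀ p : X × X, S p = B p.1 + Complex.I • B p.2 := fun p => rfl
  have hBι : ∀ y : Y, B (ι y) = A y := by
    intro y
    ext t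
    have h1 : Bre (ι y) = Are y := hBre y
    have h2 : Bim (ι y) = Aim y := hBim y
    simp only [hB, ContinuousLinearMap.add_apply, ContinuousLinearMap.comp_apply,
      ContinuousLinearMap.smul_apply, h1, h2]
    simp only [Are, Aim, ContinuousLinearMap.comp_apply,
      ContinuousLinearMap.compLeftContinuous_apply,
      AddMonoidHom.compLeftContinuous_apply, ContinuousMap.comp_apply, ContinuousMap.coe_mk, ContinuousMap.add_apply,
      ContinuousMap.smul_apply, ContinuousLinearMap.coe_restrictScalars',
      Complex.reCLM_apply, Complex.imCLM_apply, Complex.ofRealCLM_apply]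
    have : Acl y = A y := rfl
    rw [this]
    rw [smul_eq_mul, mul_comm]
    exact Complex.re_add_im _
  have hA1 : ∀ y : Y, B (ι y) = T (y, 0) := fun y => hBι y
  clear_value S B
  clear hBι hBre hBim hS hB ho Are Aim hAcl Acl hAbdd hA A o Bre Bim hc₀
  refine ⟨S.toLinearMap, ?_, ?_, ?_⟩
  · intro p
    show S (complexificationJ p) = Complex.I • S p
    have : complexificationJ p = ((-p.2, p.1) : X × X) := rfl
    rw [this, hSapp, hSapp]
    simp only [map_neg]
    ext t
    simp only [ContinuousMap.add_apply, ContinuousMap.smul_apply, ContinuousMap.neg_apply,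
      smul_eq_mul]
    linear_combination (-(B p.2) t) * Complex.I_sq
  · refine ⟨2 * ‖B‖, fun p => ?_⟩
    have h1 : ‖S p‖ ≤ ‖B p.1‖ + ‖B p.2‖ := by
      rw [hSapp]
      refine le_trans (norm_add_le _ _) ?_
      have hI : ‖Complex.I • B p.2‖ = ‖B p.2‖ := by
        have := norm_smul Complex.I (B p.2)
        simpa using this
      rw [hI]
    have h2 : ‖B p.1‖ ≤ ‖B‖ * complexificationNorm p :=
      le_trans (B.le_opNorm p.1) (mul_le_mul_of_nonneg_left (cn_fst_le p) (norm_nonneg B))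
    have h3 : ‖B p.2‖ ≤ ‖B‖ * complexificationNorm p :=
      le_trans (B.le_opNorm p.2) (mul_le_mul_of_nonneg_left (cn_snd_le p) (norm_nonneg B))
    calc ‖S p‖ ≤ ‖B p.1‖ + ‖B p.2‖ := h1
      _ ≤ 2 * ‖B‖ * complexificationNorm p := by linarith
  · intro p
    show S (ι p.1, ι p.2) = T p
    rw [hSapp]
    simp only []
    rw [hA1, hA1, ← hTc (p.2, 0)]
    have : complexificationJ ((p.2, 0) : Y × Y) = ((0, p.2) : Y × Y) := by
      simp [complexificationJ, LinearMap.coe_mk]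
    rw [this, ← map_add]
    congr 1
    simp
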